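/- Let $\lambda, \mu \in \mathbb{N}^n$ with $\lambda \preceq \mu$ in the modified Bruhat order. Then $l(\lambda) \ge l(\mu)$, where $l(\nu)$ denotes the length of $\nu$, i.e., the maximal index $m$ with $\nu_m \ne 0$ (and $l(0) = 0$). -/

import Mathlib

/-- An element `t_τ ∘ u` of the extended affine Weyl group `W = Sₙ ⋉ ℤⁿ`
of type `A_{n-1}`:  `perm` is the finite part `u ∈ Sₙ`, `tr` the translation `τ`. -/
structure AffW (n : ℕ) where
  perm : Equiv.Perm (Fin n)
  tr : Fin n → ℤ

namespace AffW

variable {n : ℕ}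

/-- The affine action on `X = ℤⁿ` : `(t_τ u)(x) = u·x + τ` where `(u·x)_i = x_{u⁻¹ i}`. -/
def act (w : AffW n) (x : Fin n → ℤ) : Fin n → ℤ :=
  fun i => x (w.perm⁻¹ i) + w.tr i

/-- Group multiplication (composition of affine maps). -/
def mul (a b : AffW n) : AffW n :=
  ⟨a.perm * b.perm, fun i => b.tr (a.perm⁻¹ i) + a.tr i⟩

def one (n : ℕ) : AffW n := ⟨1, 0⟩

/-- An affine root `ε_i - ε_j + k`, recorded as the data `(i, j, k)`. -/
abbrev Root (n : ℕ) := Fin n × Fin n × ℤ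

/-- A positive affine root: `Δ⁺ = Δ_f⁺ ∪ (Δ_f + ℤ_{>0})`. -/
def IsPos (α : Root n) : Prop := 0 < α.2.2 ∨ (α.2.2 = 0 ∧ α.1 < α.2.1)

/-- A negative affine root. -/
def IsNeg (α : Root n) : Prop := IsPos (α.2.1, α.1, -α.2.2)

/-- Action of `w` on affine roots, determined by `(wα)(x) = α(w⁻¹x)`. -/
def rootAct (w : AffW n) (α : Root n) : Root n :=
  (w.perm α.1, w.perm α.2.1, α.2.2 - w.tr (w.perm α.1) + w.tr (w.perm α.2.1))

/-- The length `ℓ(w) = #{α ∈ Δ⁺ ∣ wα ∈ -Δ⁺}`. -/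
noncomputable def len (w : AffW n) : ℕ :=
  Set.ncard {α : Root n | IsPos α ∧ IsNeg (rootAct w α)}

/-- The affine reflection `s_{ε_i - ε_j + k}` as an element of `W`. -/
def refl (i j : Fin n) (k : ℤ) : AffW n :=
  ⟨Equiv.swap i j, fun m => if m = i then -k else if m = j then k else 0⟩

/-- Bruhat covering-type relation: right multiplication by a reflection which
increases the length. -/
def BruhatStep (a b : AffW n) : Prop :=
  (∃ i j k, i ≠ j ∧ b = mul a (refl i j k)) ∧ len a < len b

/-- The Bruhat order on the extended affine Weyl group. -/
def BruhatLe : AffW n → AffW n → Prop := Relation.ReflTransGen BruhatStep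

/-- `m_τ`, the shortest element of the coset `t_τ Sₙ`. -/
noncomputable def minRep (τ : Fin n → ℤ) : AffW n :=
  ⟨(Finset.exists_min_image (Finset.univ : Finset (Equiv.Perm (Fin n)))
      (fun u => len (⟨u, τ⟩ : AffW n)) ⟨1, Finset.mem_univ 1⟩).choose, τ⟩

/-- The Bruhat order on `X = ℤⁿ` induced from the extended affine Weyl group:
`τ ≤ η ↔ m_τ ≤ m_η`. -/
noncomputable def XLe (τ η : Fin n → ℤ) : Prop := BruhatLe (minRep τ) (minRep η)

end AffW

/-- The length `l(ν)` of a composition: the largest (1-based) index of a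
nonzero entry, with `l(0) = 0`. -/
def compLen {n : ℕ} (ν : Fin n → ℕ) : ℕ :=
  (Finset.univ.filter (fun i : Fin n => ν i ≠ 0)).sup (fun i => (i : ℕ) + 1)

-- ============ auxiliary development ============
namespace AffW

variable {n : ℕ}

/-- linear functional detecting positivity of roots -/
def theta (α : Root n) : ℤ := (α.2.1 : ℤ) - (α.1 : ℤ) + n * α.2.2

lemma theta_nd {x y : Fin n} {l : ℤ} (hxy : x ≠ y) : theta (x, y, l) ≠ 0 := by
  intro h
  simp only [theta] at h
  have hx : (x:ℤ) < n := by exact_mod_cast x.isLt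
  have hy : (y:ℤ) < n := by exact_mod_cast y.isLt
  have hx0 : (0:ℤ) ≤ x := Int.ofNat_nonneg _
  have hy0 : (0:ℤ) ≤ y := Int.ofNat_nonneg _
  have hn : (0:ℤ) < n := by exact_mod_cast x.pos
  have hne : (x:ℤ) ≠ (y:ℤ) := by
    intro h'
    exact hxy (Fin.ext (by exact_mod_cast h'))
  rcases lt_trichotomy l 0 with hl | hl | hl
  · have : (n:ℤ) * l ≤ n * (-1) := mul_le_mul_of_nonneg_left (by omega) hn.le
    linarith
  · subst hl; simp at h; omega
  · have : (n:ℤ) * 1 ≤ n * l := mul_le_mul_of_nonneg_left (by omega) hn.le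
    linarith

lemma isPos_iff (α : Root n) : IsPos α ↔ 0 < theta α := by
  obtain ⟨x, y, l⟩ := α
  have hx : (x:ℤ) < n := by exact_mod_cast x.isLt
  have hy : (y:ℤ) < n := by exact_mod_cast y.isLt
  have hx0 : (0:ℤ) ≤ x := Int.ofNat_nonneg _
  have hy0 : (0:ℤ) ≤ y := Int.ofNat_nonneg _
  constructor
  · rintro (h | ⟨h1, h2⟩)
    · have : (1:ℤ) ≤ l := h
      have : (n:ℤ) * 1 ≤ n * l := by
        apply mul_le_mul_of_nonneg_left this (by positivity)
      simp only [theta]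
      nlinarith
    · have : (x:ℤ) < y := by exact_mod_cast h2
      simp only [theta, h1]
      nlinarith
  · intro h
    simp only [theta] at h
    by_cases hl : 0 < l
    · exact Or.inl hl
    · push_neg at hl
      rcases lt_or_eq_of_le hl with hl' | hl'
      · exfalso
        have : (n:ℤ) * l ≤ n * (-1) := by
          apply mul_le_mul_of_nonneg_left (by omega) (by positivity)
        nlinarith
      · right
        refine ⟨hl', ?_⟩
        subst hl'
        simp at h
        exact_mod_cast h

lemma isNeg_iff (α : Root n) : IsNeg α ↔ theta α < 0 := by
  rw [IsNeg, isPos_iff]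
  obtain ⟨x, y, l⟩ := α
  simp only [theta]
  constructor <;> intro h <;> linarith

/-- the window function `g_w` -/
def gmap (w : AffW n) (r : Fin n) : ℤ := (w.perm r : ℤ) + n * w.tr (w.perm r)

lemma theta_rootAct (w : AffW n) (α : Root n) :
    theta (rootAct w α) = gmap w α.2.1 - gmap w α.1 + n * α.2.2 := by
  obtain ⟨x, y, l⟩ := α
  simp only [rootAct, theta, gmap]
  ring

lemma rootAct_mul (a b : AffW n) (α : Root n) :
    rootAct (mul a b) α = rootAct a (rootAct b α) := by
  obtain ⟨x, y, l⟩ := α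
  simp only [rootAct, mul, Equiv.Perm.mul_apply, mul_inv_rev, Equiv.Perm.inv_def, Equiv.symm_apply_apply,
    Equiv.apply_symm_apply]
  refine Prod.ext rfl (Prod.ext rfl ?_)
  simp only
  ring

lemma rootAct_one (α : Root n) : rootAct (one n) α = α := by
  obtain ⟨x, y, l⟩ := α
  simp [rootAct, one]

lemma ext' {a b : AffW n} (h1 : a.perm = b.perm) (h2 : a.tr = b.tr) : a = b := by
  cases a; cases b; simp_all

lemma refl_tr_i {i j : Fin n} (k : ℤ) : (refl i j k).tr i = -k := by simp [refl]

lemma refl_tr_j {i j : Fin n} (hij : i ≠ j) (k : ℤ) : (refl i j k).tr j = k := by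
  simp [refl, hij.symm]

lemma refl_tr_other {i j m : Fin n} (hmi : m ≠ i) (hmj : m ≠ j) (k : ℤ) :
    (refl i j k).tr m = 0 := by simp [refl, hmi, hmj]

lemma refl_mul_refl {i j : Fin n} (hij : i ≠ j) (k : ℤ) :
    mul (refl i j k) (refl i j k) = one n := by
  apply ext'
  · simp [mul, refl, one, Equiv.swap_mul_self]
  · funext m
    simp only [mul, one, refl]
    rcases eq_or_ne m i with rfl | hmi
    · simp [Equiv.swap_inv, Equiv.swap_apply_left, hij.symm, hij]
    rcases eq_or_ne m j with rfl | hmj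
    · simp [Equiv.swap_inv, Equiv.swap_apply_right, hij.symm, hij]
    · simp [Equiv.swap_inv, Equiv.swap_apply_of_ne_of_ne hmi hmj, hmi, hmj]

lemma rootAct_refl_refl {i j : Fin n} (hij : i ≠ j) (k : ℤ) (γ : Root n) :
    rootAct (refl i j k) (rootAct (refl i j k) γ) = γ := by
  rw [← rootAct_mul, refl_mul_refl hij, rootAct_one]

/-- negation of roots -/
def negR (α : Root n) : Root n := (α.2.1, α.1, -α.2.2)

lemma theta_negR (α : Root n) : theta (negR α) = -theta α := by
  obtain ⟨x, y, l⟩ := α; simp [negR, theta]; ring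

lemma rootAct_negR (w : AffW n) (α : Root n) :
    rootAct w (negR α) = negR (rootAct w α) := by
  obtain ⟨x, y, l⟩ := α
  simp only [negR, rootAct]
  refine Prod.ext rfl (Prod.ext rfl ?_)
  simp only
  ring

/-- the inversion set -/
def invSet (w : AffW n) : Set (Root n) :=
  {α | 0 < theta α ∧ theta (rootAct w α) < 0}

lemma len_eq (w : AffW n) : len w = (invSet w).ncard := by
  unfold len invSet
  congr 1
  ext α
  simp [isPos_iff, isNeg_iff]

lemma invSet_finite (w : AffW n) : (invSet w).Finite := by
  rcases Nat.eq_zero_or_pos n with rfl | hn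
  · have : IsEmpty (Root 0) := by
      constructor; rintro ⟨x, _⟩; exact x.elim0
    exact Set.toFinite _
  set B : ℤ := ∑ r : Fin n, |gmap w r| with hB
  have hBr : ∀ r, |gmap w r| ≤ B :=
    fun r => Finset.single_le_sum (f := fun r => |gmap w r|)
      (fun _ _ => abs_nonneg _) (Finset.mem_univ r)
  set c : ℤ := max (n : ℤ) (2 * B) with hc
  apply Set.Finite.subset
    (Set.Finite.prod (Set.finite_univ (α := Fin n))
      (Set.Finite.prod (Set.finite_univ (α := Fin n)) (Set.finite_Icc (-c) c)))
  rintro ⟨x, y, l⟩ ⟨h1, h2⟩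
  rw [theta_rootAct] at h2
  simp only [theta] at h1
  simp only at h2
  have hx : (x:ℤ) < n := by exact_mod_cast x.isLt
  have hy : (y:ℤ) < n := by exact_mod_cast y.isLt
  have hx0 : (0:ℤ) ≤ x := Int.ofNat_nonneg _
  have hy0 : (0:ℤ) ≤ y := Int.ofNat_nonneg _
  have hnl1 : -(n:ℤ) < n * l := by linarith
  have hnl2 : (n:ℤ) * l ≤ 2 * B := by
    have := hBr x; have := hBr y
    have hax := abs_le.mp (hBr x)
    have hay := abs_le.mp (hBr y)
    linarith
  have habs : |l| ≤ |(n:ℤ) * l| := by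
    rw [abs_mul]
    have h1n : (1:ℤ) ≤ |(n:ℤ)| := by
      rw [abs_of_nonneg (by positivity)]; exact_mod_cast hn
    nlinarith [abs_nonneg l]
  have hcc : |(n:ℤ) * l| ≤ c := by
    rw [abs_le]
    constructor
    · have : -c ≤ -(n:ℤ) := by simp [hc]
      linarith
    · exact hnl2.trans (le_max_right _ _)
  refine ⟨Set.mem_univ _, Set.mem_univ _, ?_⟩
  have := abs_le.mp (habs.trans hcc)
  simpa [Set.mem_Icc] using this

lemma theta_rootAct_ne {w : AffW n} {γ : Root n} (h : theta γ ≠ 0) :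
    theta (rootAct w γ) ≠ 0 := by
  obtain ⟨x, y, l⟩ := γ
  rcases eq_or_ne x y with rfl | hxy
  · have : theta (rootAct w (x, x, l)) = theta (x, x, l) := by
      simp only [rootAct, theta]; ring
    rw [this]; exact h
  · exact theta_nd (fun h' => hxy (w.perm.injective h'))

lemma gmap_refl {i j : Fin n} (hij : i ≠ j) (k : ℤ) (r : Fin n) :
    gmap (refl i j k) r =
      r + (if r = i then ((j:ℤ) - i + n * k) else if r = j then -((j:ℤ) - i + n * k) else 0) := by
  rcases eq_or_ne r i with rfl | hri
  · simp only [gmap, refl, Equiv.swap_apply_left]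
    simp [hij, hij.symm]; ring
  rcases eq_or_ne r j with rfl | hrj
  · simp only [gmap, refl, Equiv.swap_apply_right]
    simp [hij, hri]; ring
  · simp only [gmap, refl, Equiv.swap_apply_of_ne_of_ne hri hrj]
    simp [hri, hrj]

lemma theta_rootAct_refl {i j : Fin n} (hij : i ≠ j) (k : ℤ) (x y : Fin n) (l : ℤ) :
    theta (rootAct (refl i j k) (x, y, l)) =
      theta (x, y, l)
      + (if y = i then ((j:ℤ) - i + n * k) else if y = j then -((j:ℤ) - i + n * k) else 0)
      - (if x = i then ((j:ℤ) - i + n * k) else if x = j then -((j:ℤ) - i + n * k) else 0) := by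
  rw [theta_rootAct]
  simp only [gmap_refl hij]
  simp only [theta]
  ring

/-- the pairing on `N(s_β) \ {β}` -/
def sigmaR (i j : Fin n) (k : ℤ) (γ : Root n) : Root n :=
  if γ.1 = i ∧ γ.2.1 = j then (i, j, 2*k - γ.2.2)
  else if γ.1 = i then (γ.2.1, j, k - γ.2.2)
  else (i, γ.1, k - γ.2.2)

lemma theta_mk (x y : Fin n) (l : ℤ) : theta (x, y, l) = (y:ℤ) - x + n*l := rfl

lemma sigma_spec {i j : Fin n} {k : ℤ} (hij : i ≠ j) (hD : 0 < theta (i, j, k))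
    {γ : Root n} (hγT : γ ∈ invSet (refl i j k)) (hγβ : γ ≠ (i, j, k)) :
    sigmaR i j k γ ∈ invSet (refl i j k) ∧ sigmaR i j k γ ≠ (i, j, k) ∧
      sigmaR i j k (sigmaR i j k γ) = γ ∧
      ∀ w : AffW n, theta (rootAct w (i, j, k)) < 0 →
        theta (rootAct w γ) + theta (rootAct w (sigmaR i j k γ)) < 0 := by
  obtain ⟨x, y, l⟩ := γ
  obtain ⟨h1, h2⟩ := hγT
  rw [theta_rootAct_refl hij, theta_mk] at h2
  rw [theta_mk] at hD h1
  rcases eq_or_ne i x with rfl | hxi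
  · rcases eq_or_ne j y with rfl | hyj
    · -- case A
      rw [if_neg (Ne.symm hij), if_pos rfl, if_pos rfl] at h2
      have hlk : l ≠ k := fun h => hγβ (by rw [h])
      have hsig : sigmaR i j k (i, j, l) = (i, j, 2*k - l) := by simp [sigmaR]
      rw [hsig]
      refine ⟨⟨?_, ?_⟩, ?_, ?_, ?_⟩
      · rw [theta_mk]; linarith
      · rw [theta_rootAct_refl hij, if_neg (Ne.symm hij), if_pos rfl, if_pos rfl, theta_mk]
        linarith
      · intro h
        have h3 : 2*k - l = k := by
          have := congrArg (fun p : Root n => p.2.2) h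
          simpa using this
        omega
      · have : sigmaR i j k (i, j, 2*k - l) = (i, j, 2*k - (2*k - l)) := by simp [sigmaR]
        rw [this]
        refine Prod.ext rfl (Prod.ext rfl ?_)
        simp
      · intro w hw
        have heq : theta (rootAct w (i, j, l)) + theta (rootAct w (i, j, 2*k - l))
            = 2 * theta (rootAct w (i, j, k)) := by
          simp only [theta_rootAct]; push_cast; ring
        linarith
    · -- case B : x = i, y ≠ j
      have hyi : y ≠ i := by
        intro h; subst h
        first | linarith | (simp at h2; linarith)
      rw [if_neg hyi, if_neg (Ne.symm hyj), if_pos rfl] at h2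
      have hsig : sigmaR i j k (i, y, l) = (y, j, k - l) := by
        simp [sigmaR, Ne.symm hyj]
      rw [hsig]
      refine ⟨⟨?_, ?_⟩, ?_, ?_, ?_⟩
      · rw [theta_mk]; linarith
      · rw [theta_rootAct_refl hij, if_neg (Ne.symm hij), if_pos rfl, if_neg hyi,
          if_neg (Ne.symm hyj), theta_mk]
        linarith
      · intro h
        have : y = i := by
          have := congrArg (fun p : Root n => p.1) h
          simpa using this
        exact hyi this
      · have : sigmaR i j k (y, j, k - l) = (i, y, k - (k - l)) := by
          simp [sigmaR, hyi]
        rw [this]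
        refine Prod.ext rfl (Prod.ext rfl ?_)
        simp
      · intro w hw
        have heq : theta (rootAct w (i, y, l)) + theta (rootAct w (y, j, k - l))
            = theta (rootAct w (i, j, k)) := by
          simp only [theta_rootAct]; push_cast; ring
        linarith
  · -- case C : x ≠ i
    have hyj : j = y := by
      by_contra hyj
      rcases eq_or_ne y i with rfl | hyi
      · rw [if_pos rfl, if_neg (Ne.symm hxi)] at h2
        rcases eq_or_ne x j with rfl | hxj
        · rw [if_pos rfl] at h2; linarith
        · rw [if_neg hxj] at h2; linarith
      · rw [if_neg hyi, if_neg (fun h => hyj h.symm), if_neg (Ne.symm hxi)] at h2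
        rcases eq_or_ne x j with rfl | hxj
        · rw [if_pos rfl] at h2; linarith
        · rw [if_neg hxj] at h2; linarith
    subst hyj
    have hxj : x ≠ j := by
      intro h; subst h
      first | linarith | (simp at h2; linarith)
    rw [if_neg (Ne.symm hij), if_pos rfl, if_neg (Ne.symm hxi), if_neg hxj] at h2
    have hsig : sigmaR i j k (x, j, l) = (i, x, k - l) := by
      simp [sigmaR, Ne.symm hxi]
    rw [hsig]
    refine ⟨⟨?_, ?_⟩, ?_, ?_, ?_⟩
    · rw [theta_mk]; linarith
    · rw [theta_rootAct_refl hij, if_neg (Ne.symm hxi), if_neg hxj, if_pos rfl, theta_mk]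
      linarith
    · intro h
      have : x = j := by
        have := congrArg (fun p : Root n => p.2.1) h
        simpa using this
      exact hxj this
    · have : sigmaR i j k (i, x, k - l) = (x, j, k - (k - l)) := by
        simp [sigmaR, hxj]
      rw [this]
      refine Prod.ext rfl (Prod.ext rfl ?_)
      simp
    · intro w hw
      have heq : theta (rootAct w (x, j, l)) + theta (rootAct w (i, x, k - l))
          = theta (rootAct w (i, j, k)) := by
        simp only [theta_rootAct]; push_cast; ring
      linarith

lemma len_lt_of_neg {a : AffW n} {i j : Fin n} {k : ℤ} (hij : i ≠ j)
    (hD : 0 < theta (i, j, k)) (hE : theta (rootAct a (i, j, k)) < 0) :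
    len (mul a (refl i j k)) < len a := by
  set t := refl i j k with ht
  set β : Root n := (i, j, k) with hβ
  set S := invSet a with hS
  set T := invSet t with hT
  set U := invSet (mul a t) with hU
  have hfS := invSet_finite a
  have hfT := invSet_finite t
  have hfU := invSet_finite (mul a t)
  have hβS : β ∈ S := ⟨hD, hE⟩
  have hβT : β ∈ T := by
    refine ⟨hD, ?_⟩
    rw [ht, hβ, theta_rootAct_refl hij, if_neg (Ne.symm hij), if_pos rfl, if_pos rfl, theta_mk]
    rw [theta_mk] at hD; linarith
  -- σ maps T \ S injectively into (S ∩ T) \ {β}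
  have hmaps : ∀ γ ∈ T \ S, sigmaR i j k γ ∈ (S ∩ T) \ {β} := by
    rintro γ ⟨hγT, hγS⟩
    have hγβ : γ ≠ β := fun h => hγS (h ▸ hβS)
    obtain ⟨hσT, hσβ, hσσ, hsum⟩ := sigma_spec hij hD hγT hγβ
    have hγpos : 0 < theta γ := hγT.1
    have hγa : ¬ theta (rootAct a γ) < 0 := fun h => hγS ⟨hγpos, h⟩
    refine ⟨⟨⟨hσT.1, ?_⟩, hσT⟩, hσβ⟩
    have := hsum a hE
    linarith
  have hinj : Set.InjOn (sigmaR i j k) (T \ S) := by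
    rintro γ₁ ⟨hγ₁T, hγ₁S⟩ γ₂ ⟨hγ₂T, hγ₂S⟩ he
    have h₁ := (sigma_spec hij hD hγ₁T (fun h => hγ₁S (h ▸ hβS))).2.2.1
    have h₂ := (sigma_spec hij hD hγ₂T (fun h => hγ₂S (h ▸ hβS))).2.2.1
    rw [← h₁, he, h₂]
  have hcard1 : (T \ S).ncard ≤ ((S ∩ T) \ {β}).ncard :=
    Set.ncard_le_ncard_of_injOn _ hmaps hinj
      (((hfS.inter_of_left T).diff))
  have hcard2 : ((S ∩ T) \ {β}).ncard + 1 = (S ∩ T).ncard :=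
    Set.ncard_diff_singleton_add_one ⟨hβS, hβT⟩ (hfS.inter_of_left T)
  have hcard3 : (S \ T).ncard + (S ∩ T).ncard = S.ncard := by
    rw [← Set.ncard_inter_add_ncard_diff_eq_ncard S T hfS]
    omega
  -- U is covered by images of S \ T and T \ S
  have hUsub : U ⊆ (rootAct t '' (S \ T)) ∪ (negR '' (rootAct t '' (T \ S))) := by
    rintro γ ⟨hγ1, hγ2⟩
    rw [rootAct_mul] at hγ2
    set δ := rootAct t γ with hδ
    have hre : rootAct t δ = γ := rootAct_refl_refl hij k γ
    rcases lt_trichotomy (theta δ) 0 with hδ0 | hδ0 | hδ0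
    · right
      refine ⟨rootAct t (negR δ), ⟨negR δ, ⟨⟨?_, ?_⟩, ?_⟩, rfl⟩, ?_⟩
      · rw [theta_negR]; linarith
      · rw [rootAct_negR, theta_negR, hre]
        linarith [hγ1]
      · intro hmem
        have := hmem.2
        rw [rootAct_negR, theta_negR] at this
        linarith
      · rw [rootAct_negR, hre]
        obtain ⟨g1, g2, g3⟩ := γ
        simp [negR]
    · exfalso
      have : theta δ ≠ 0 := theta_rootAct_ne (by linarith : theta γ ≠ 0)
      exact this hδ0
    · left
      refine ⟨δ, ⟨⟨hδ0, hγ2⟩, ?_⟩, hre⟩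
      intro hmem
      have := hmem.2
      rw [hre] at this
      linarith
  have h4 : (rootAct t '' (S \ T)).ncard ≤ (S \ T).ncard :=
    Set.ncard_image_le (hfS.diff)
  have h5 : (negR '' (rootAct t '' (T \ S))).ncard ≤ (T \ S).ncard :=
    le_trans (Set.ncard_image_le ((hfT.diff).image _)) (Set.ncard_image_le (hfT.diff))
  have h6 : U.ncard ≤ ((rootAct t '' (S \ T)) ∪ (negR '' (rootAct t '' (T \ S)))).ncard :=
    Set.ncard_le_ncard hUsub
      (Set.Finite.union ((hfS.diff).image _) (((hfT.diff).image _).image _))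
  have h7 := Set.ncard_union_le (rootAct t '' (S \ T)) (negR '' (rootAct t '' (T \ S)))
  have hlen1 : len (mul a t) = U.ncard := len_eq _
  have hlen2 : len a = S.ncard := len_eq _
  omega

lemma refl_comm {i j : Fin n} (hij : i ≠ j) (k : ℤ) : refl i j k = refl j i (-k) := by
  apply ext'
  · simp [refl, Equiv.swap_comm]
  · funext m
    simp only [refl, neg_neg]
    rcases eq_or_ne m i with rfl | hmi
    · rw [if_pos rfl, if_neg hij, if_pos rfl]
    rcases eq_or_ne m j with rfl | hmj
    · rw [if_neg hmi, if_pos rfl, if_pos rfl]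
    · rw [if_neg hmi, if_neg hmj, if_neg hmj, if_neg hmi]

lemma step_norm {a b : AffW n} (h : BruhatStep a b) :
    ∃ i j k, i ≠ j ∧ b = mul a (refl i j k) ∧ 0 < theta (i, j, k) ∧
      0 < theta (rootAct a (i, j, k)) := by
  obtain ⟨⟨i, j, k, hij, rfl⟩, hlen⟩ := h
  have key : ∀ (i' j' : Fin n) (k' : ℤ), i' ≠ j' → refl i' j' k' = refl i j k →
      0 < theta (i', j', k') → 0 < theta (rootAct a (i', j', k')) := by
    intro i' j' k' hij' hrefl hD
    rcases lt_trichotomy (theta (rootAct a (i', j', k'))) 0 with hE | hE | hE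
    · exfalso
      have := len_lt_of_neg hij' hD hE
      rw [hrefl] at this
      omega
    · exact absurd hE (theta_rootAct_ne (theta_nd hij'))
    · exact hE
  rcases lt_trichotomy (theta (i, j, k)) 0 with hD | hD | hD
  · refine ⟨j, i, -k, hij.symm, by rw [← refl_comm hij], ?_, ?_⟩
    · rw [theta_mk]; rw [theta_mk] at hD; push_cast; linarith
    · exact key j i (-k) hij.symm (refl_comm hij k).symm
        (by rw [theta_mk]; rw [theta_mk] at hD; push_cast; linarith)
  · exact absurd hD (theta_nd hij)
  · exact ⟨i, j, k, hij, rfl, hD, key i j k hij rfl hD⟩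

/-! ## the affine permutation model on ℤ -/

def res (hn : 0 < n) (z : ℤ) : Fin n :=
  ⟨(z % n).toNat, by
    have h0 : (0:ℤ) ≤ z % n := Int.emod_nonneg z (by exact_mod_cast hn.ne')
    have h1 : z % n < n := Int.emod_lt_of_pos z (by exact_mod_cast hn)
    omega⟩

def fa (hn : 0 < n) (w : AffW n) (z : ℤ) : ℤ :=
  gmap w (res hn z) + n * (z / n)

lemma res_val (hn : 0 < n) (z : ℤ) : ((res hn z : ℕ) : ℤ) = z % n := by
  simp only [res]
  have h0 : (0:ℤ) ≤ z % n := Int.emod_nonneg z (by exact_mod_cast hn.ne')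
  omega

lemma res_encode (hn : 0 < n) (c : Fin n) (m : ℤ) :
    res hn ((c : ℤ) + n * m) = c ∧ ((c : ℤ) + n * m) / n = m := by
  have hc0 : (0:ℤ) ≤ c := Int.ofNat_nonneg _
  have hc1 : (c:ℤ) < n := by exact_mod_cast c.isLt
  have hmod : ((c : ℤ) + n * m) % n = c := by
    rw [Int.add_mul_emod_self_left, Int.emod_eq_of_lt hc0 hc1]
  constructor
  · apply Fin.ext
    have := res_val hn ((c : ℤ) + n * m)
    rw [hmod] at this
    omega
  · rw [Int.add_mul_ediv_left _ _ (by exact_mod_cast hn.ne' : (n:ℤ) ≠ 0),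
      Int.ediv_eq_zero_of_lt hc0 hc1, zero_add]

lemma res_decode (hn : 0 < n) (z : ℤ) : ((res hn z : ℕ) : ℤ) + n * (z / n) = z := by
  rw [res_val]
  have := Int.emod_add_mul_ediv z n
  linarith

lemma gmap_mul (a b : AffW n) (r : Fin n) :
    gmap (mul a b) r = gmap a (b.perm r) + n * b.tr (b.perm r) := by
  simp only [gmap, mul, Equiv.Perm.mul_apply, Equiv.Perm.inv_def, Equiv.symm_apply_apply]
  ring

lemma fa_mul (hn : 0 < n) (a b : AffW n) (z : ℤ) :
    fa hn (mul a b) z = fa hn a (fa hn b z) := by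
  have hz : gmap b (res hn z) + (n:ℤ) * (z / n)
      = ((b.perm (res hn z) : ℕ) : ℤ) + n * (b.tr (b.perm (res hn z)) + z / n) := by
    simp only [gmap]; ring
  obtain ⟨he1, he2⟩ := res_encode hn (b.perm (res hn z)) (b.tr (b.perm (res hn z)) + z / n)
  simp only [fa]
  rw [hz, he1, he2, gmap_mul]
  ring

lemma fa_refl (hn : 0 < n) {i j : Fin n} (hij : i ≠ j) (k : ℤ) (z : ℤ) :
    fa hn (refl i j k) z = z +
      (if res hn z = i then ((j:ℤ) - i + n * k)
       else if res hn z = j then -((j:ℤ) - i + n * k) else 0) := by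
  rw [fa, gmap_refl hij]
  have := res_decode hn z
  linarith

/-- the rank-type statistic -/
def Rset (hn : 0 < n) (w : AffW n) (P J : ℤ) : Set ℤ := {z : ℤ | z ≤ P ∧ J ≤ fa hn w z}

lemma Rset_finite (hn : 0 < n) (w : AffW n) (P J : ℤ) : (Rset hn w P J).Finite := by
  set B : ℤ := ∑ r : Fin n, |gmap w r| with hB
  have hBr : ∀ r, |gmap w r| ≤ B :=
    fun r => Finset.single_le_sum (f := fun r => |gmap w r|)
      (fun _ _ => abs_nonneg _) (Finset.mem_univ r)
  apply Set.Finite.subset (Set.finite_Icc (J - B) P)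
  rintro z ⟨h1, h2⟩
  have h3 := res_decode hn z
  have h4 := abs_le.mp (hBr (res hn z))
  have h5 : (0:ℤ) ≤ ((res hn z : ℕ) : ℤ) := Int.ofNat_nonneg _
  rw [fa] at h2
  simp only [Set.mem_Icc]
  omega

lemma Rset_mono (hn : 0 < n) {a : AffW n} {i j : Fin n} {k : ℤ} (hij : i ≠ j)
    (hD : 0 < theta (i, j, k)) (hE : 0 < theta (rootAct a (i, j, k))) (P J : ℤ) :
    (Rset hn a P J).ncard ≤ (Rset hn (mul a (refl i j k)) P J).ncard := by
  set b := mul a (refl i j k) with hb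
  set D : ℤ := (j:ℤ) - i + n * k with hDdef
  have hD' : 0 < D := by rw [theta_mk] at hD; exact hD
  have hEval : theta (rootAct a (i, j, k)) = gmap a j - gmap a i + n * k := by
    rw [theta_rootAct]
  set E : ℤ := gmap a j - gmap a i + n * k with hEdef
  have hE' : 0 < E := by rw [hEval] at hE; exact hE
  -- computations
  have hfb : ∀ z, fa hn b z = fa hn a (fa hn (refl i j k) z) := fun z => fa_mul hn _ _ z
  have hres_i : ∀ z : ℤ, res hn z = i → res hn (z + D) = j ∧ (z + D) / n = k + z / n := by
    intro z hz
    have h3 := res_decode hn z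
    rw [hz] at h3
    have : z + D = (j:ℤ) + n * (k + z / n) := by rw [hDdef]; linarith
    rw [this]
    exact res_encode hn j (k + z / n)
  have hres_j : ∀ z : ℤ, res hn z = j → res hn (z - D) = i ∧ (z - D) / n = z / n - k := by
    intro z hz
    have h3 := res_decode hn z
    rw [hz] at h3
    have : z - D = (i:ℤ) + n * (z / n - k) := by rw [hDdef]; linarith
    rw [this]
    exact res_encode hn i (z / n - k)
  have hfa_i : ∀ z : ℤ, res hn z = i → fa hn a (z + D) = fa hn a z + E := by
    intro z hz
    obtain ⟨h1, h2⟩ := hres_i z hz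
    rw [fa, fa, h1, h2, hz, hEdef]
    ring
  have hft : ∀ z : ℤ, fa hn (refl i j k) z =
      z + (if res hn z = i then D else if res hn z = j then -D else 0) := fun z =>
    fa_refl hn hij k z
  -- the injection
  set φ : ℤ → ℤ := fun z => if J ≤ fa hn b z then z else z - D with hφ
  have hbad : ∀ z ∈ Rset hn a P J, ¬ J ≤ fa hn b z →
      (res hn z = j ∧ fa hn b (z - D) = fa hn a z) ∧ fa hn b z = fa hn a (z - D) := by
    rintro z ⟨hz1, hz2⟩ hzb
    have hcase : res hn z = j := by
      rcases eq_or_ne (res hn z) i with hri | hri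
      · exfalso
        have := hfb z
        rw [hft z, if_pos hri] at this
        rw [this, hfa_i z hri] at hzb
        omega
      rcases eq_or_ne (res hn z) j with hrj | hrj
      · exact hrj
      · exfalso
        have := hfb z
        rw [hft z, if_neg hri, if_neg hrj, add_zero] at this
        exact hzb (by rw [this]; exact hz2)
    obtain ⟨h1, _⟩ := hres_j z hcase
    constructor
    · refine ⟨hcase, ?_⟩
      rw [hfb (z - D), hft (z - D), if_pos h1]
      have h2 : z - D + D = z := by ring
      rw [h2]
    · rw [hfb z, hft z, if_neg (by rw [hcase]; exact hij.symm), if_pos hcase]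
      have h2 : z + -D = z - D := by ring
      rw [h2]
  have hmaps : ∀ z ∈ Rset hn a P J, φ z ∈ Rset hn b P J := by
    intro z hz
    obtain ⟨hz1, hz2⟩ := hz
    by_cases hgood : J ≤ fa hn b z
    · rw [hφ]; simp only [if_pos hgood]
      exact ⟨hz1, hgood⟩
    · obtain ⟨⟨hcase, hval⟩, _⟩ := hbad z ⟨hz1, hz2⟩ hgood
      rw [hφ]; simp only [if_neg hgood]
      refine ⟨by omega, ?_⟩
      rw [hval]
      exact hz2
  have hinj : Set.InjOn φ (Rset hn a P J) := by
    intro z₁ hz₁ z₂ hz₂ he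
    by_cases h1 : J ≤ fa hn b z₁ <;> by_cases h2 : J ≤ fa hn b z₂ <;>
      rw [hφ] at he <;> simp only [if_pos, if_neg, h1, h2, if_true, if_false] at he
    · exact he
    · -- z₁ good, z₂ bad : z₁ = z₂ - D
      exfalso
      obtain ⟨_, hval2⟩ := hbad z₂ hz₂ h2
      rw [hval2, ← he] at h2
      exact h2 hz₁.2
    · exfalso
      obtain ⟨_, hval2⟩ := hbad z₁ hz₁ h1
      rw [hval2, he] at h1
      exact h1 hz₂.2
    · omega
  exact Set.ncard_le_ncard_of_injOn φ hmaps hinj (Rset_finite hn b P J)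

lemma Rset_mono_chain (hn : 0 < n) {a b : AffW n} (h : BruhatLe a b) (P J : ℤ) :
    (Rset hn a P J).ncard ≤ (Rset hn b P J).ncard := by
  induction h with
  | refl => exact le_refl _
  | tail h₁ hstep ih =>
    obtain ⟨i, j, k, hij, rfl, hD, hE⟩ := step_norm hstep
    exact le_trans ih (Rset_mono hn hij hD hE P J)

lemma Rset_minRep (hn : 0 < n) (ν : Fin n → ℕ) (p : ℕ) :
    (Rset hn (minRep (fun c => -(ν c : ℤ))) ((n:ℤ) - 1) (p:ℤ)).ncard
      = {c : Fin n | p ≤ (c : ℕ) ∧ ν c = 0}.ncard := by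
  set w := minRep (fun c => -(ν c : ℤ)) with hw
  set u := w.perm with hu
  have htr : w.tr = fun c => -(ν c : ℤ) := rfl
  have hgm : ∀ r : Fin n, gmap w r = ((u r : ℕ) : ℤ) - n * (ν (u r) : ℤ) := by
    intro r
    rw [gmap, htr]
    ring
  have hset : Rset hn w ((n:ℤ) - 1) (p:ℤ)
      = (fun r : Fin n => ((r : ℕ) : ℤ)) '' {r : Fin n | p ≤ ((u r : Fin n) : ℕ) ∧ ν (u r) = 0} := by
    ext z
    constructor
    · rintro ⟨hz1, hz2⟩
      rw [fa, hgm] at hz2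
      set r := res hn z with hr
      set q := z / (n:ℤ) with hq
      have hdec : ((r : ℕ) : ℤ) + n * q = z := res_decode hn z
      have hr0 : (0:ℤ) ≤ ((r : ℕ) : ℤ) := Int.ofNat_nonneg _
      have hr1 : ((r : ℕ) : ℤ) < n := by exact_mod_cast r.isLt
      have hc0 : (0:ℤ) ≤ ((u r : ℕ) : ℤ) := Int.ofNat_nonneg _
      have hc1 : ((u r : ℕ) : ℤ) < n := by exact_mod_cast (u r).isLt
      have hm0 : (0:ℤ) ≤ (ν (u r) : ℤ) := Int.ofNat_nonneg _
      have hq0 : q ≤ 0 := by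
        by_contra hq1
        push_neg at hq1
        have : (n:ℤ) * 1 ≤ n * q := by
          apply mul_le_mul_of_nonneg_left (by omega) (by positivity)
        omega
      have hnq : (n:ℤ) * q ≤ 0 := mul_nonpos_of_nonneg_of_nonpos (by positivity) hq0
      have hnm : (0:ℤ) ≤ n * (ν (u r) : ℤ) := by positivity
      have hkey : (n:ℤ) * ((ν (u r) : ℤ) - q) < n * 1 := by
        have : (n:ℤ) * (ν (u r) : ℤ) - n * q ≤ ((u r : ℕ) : ℤ) - p := by linarith
        have hp0 : (0:ℤ) ≤ (p:ℤ) := Int.ofNat_nonneg _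
        nlinarith
      have hmq : (ν (u r) : ℤ) - q < 1 :=
        lt_of_mul_lt_mul_left hkey (by positivity)
      have hm_eq : (ν (u r) : ℤ) = 0 ∧ q = 0 := by omega
      obtain ⟨hm1, hm2⟩ := hm_eq
      have hnq0 : (n:ℤ) * q = 0 := by rw [hm2, mul_zero]
      refine ⟨r, ⟨?_, by exact_mod_cast hm1⟩, ?_⟩
      · have : (p:ℤ) ≤ ((u r : ℕ) : ℤ) := by
          rw [hm1] at hz2
          linarith
        exact_mod_cast this
      · show ((r : ℕ) : ℤ) = z
        omega
    · rintro ⟨r, ⟨hr1, hr2⟩, rfl⟩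
      obtain ⟨he1, he2⟩ := res_encode hn r 0
      rw [mul_zero, add_zero] at he1 he2
      have hr1' : ((r:ℕ):ℤ) < n := by exact_mod_cast r.isLt
      refine ⟨?_, ?_⟩
      · show ((r : ℕ) : ℤ) ≤ (n:ℤ) - 1
        omega
      rw [fa, he1, he2, hgm, hr2]
      push_cast
      simp
      exact_mod_cast hr1
  rw [hset, Set.ncard_image_of_injective _ (fun r s h => Fin.ext (by exact_mod_cast h))]
  have himg : {c : Fin n | p ≤ (c : ℕ) ∧ ν c = 0}
      = u '' {r : Fin n | p ≤ ((u r : Fin n) : ℕ) ∧ ν (u r) = 0} := by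
    have : {r : Fin n | p ≤ ((u r : Fin n) : ℕ) ∧ ν (u r) = 0}
        = (⇑u) ⁻¹' {c : Fin n | p ≤ (c : ℕ) ∧ ν c = 0} := rfl
    rw [this, Set.image_preimage_eq _ u.surjective]
  rw [himg, Set.ncard_image_of_injective _ u.injective]

end AffW

open AffW in
/-- If `λ ⪯ μ` in the modified Bruhat order on `ℕⁿ`, then `l(λ) ≥ l(μ)`. -/
theorem compLen_antitone_of_prec (n : ℕ) (lam mu : Fin n → ℕ)
    (hle : XLe (fun i => -(lam i : ℤ)) (fun i => -(mu i : ℤ))) :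
    compLen mu ≤ compLen lam := by
  rcases Nat.eq_zero_or_pos n with rfl | hn
  · apply Finset.sup_le
    intro c hc
    exact c.elim0
  set p := compLen lam with hp
  have hp_le : ∀ c : Fin n, lam c ≠ 0 → (c:ℕ) + 1 ≤ p := by
    intro c hc
    exact Finset.le_sup (f := fun i : Fin n => (i:ℕ)+1)
      (Finset.mem_filter.mpr ⟨Finset.mem_univ c, hc⟩)
  have hchain : (Rset hn (minRep (fun i => -(lam i : ℤ))) ((n:ℤ)-1) (p:ℤ)).ncard
      ≤ (Rset hn (minRep (fun i => -(mu i : ℤ))) ((n:ℤ)-1) (p:ℤ)).ncard :=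
    Rset_mono_chain hn hle ((n:ℤ)-1) (p:ℤ)
  rw [Rset_minRep hn lam p, Rset_minRep hn mu p] at hchain
  have hfull : {c : Fin n | p ≤ (c:ℕ) ∧ lam c = 0} = {c : Fin n | p ≤ (c:ℕ)} := by
    ext c
    simp only [Set.mem_setOf_eq, and_iff_left_iff_imp]
    intro hpc
    by_contra hc
    have := hp_le c hc
    omega
  rw [hfull] at hchain
  have hsub : {c : Fin n | p ≤ (c:ℕ) ∧ mu c = 0} ⊆ {c : Fin n | p ≤ (c:ℕ)} :=
    fun c hc => hc.1
  have heq : {c : Fin n | p ≤ (c:ℕ) ∧ mu c = 0} = {c : Fin n | p ≤ (c:ℕ)} :=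
    Set.eq_of_subset_of_ncard_le hsub
      (le_trans hchain (le_of_eq rfl)) (Set.toFinite _)
  apply Finset.sup_le
  intro c hc
  have hcmu : mu c ≠ 0 := (Finset.mem_filter.mp hc).2
  by_contra hcp
  push_neg at hcp
  have hcp' : p ≤ (c:ℕ) := by omega
  have : c ∈ {c : Fin n | p ≤ (c:ℕ) ∧ mu c = 0} := heq ▸ hcp'
  exact hcmu this.2
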